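/- Let A be a ring with f ∈ A and suppose A has f^∞-torsion bounded by N. If M is an A-module which is completely flat for the f-adic topology (M/fM flat over A/fA and Tor_k^A(M, A/fA) = 0 for k ≥ 1), then M also has f^∞-torsion bounded by N. -/

import Mathlib

open scoped TensorProduct
open CategoryTheory CategoryTheory.Limits CategoryTheory.MonoidalCategory

noncomputable section
variable (A : Type) [CommRing A] (f : A)

instance projOfAA : Projective (ModuleCat.of A A) :=
  ModuleCat.projective_of_free (ι := PUnit.{1}) (Module.Basis.singleton PUnit.{1} A)

/-- Free resolution of `A ⧸ (f)` starting `… → A --f--> A → A/(f)`. -/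
def resCx : ChainComplex (ModuleCat A) ℕ :=
  ChainComplex.mk' (ModuleCat.of A A) (ModuleCat.of A A)
    (ModuleCat.ofHom (LinearMap.lsmul A A f))
    (fun g => ⟨_, Projective.d g,
      (Category.assoc _ _ _).trans ((congrArg _ (kernel.condition g)).trans comp_zero)⟩)

lemma resCx_d_1_0 :
    (resCx A f).d 1 0 = ModuleCat.ofHom (LinearMap.lsmul A A f) := by
  simp [resCx]

lemma resCx_exactAt_succ (n : ℕ) : (resCx A f).ExactAt (n + 1) := by
  rw [HomologicalComplex.exactAt_iff' _ (n + 1 + 1) (n + 1) n (by simp) (by simp)]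
  have h := exact_d_f ((resCx A f).d (n + 1) n)
  unfold resCx at h ⊢
  refine ShortComplex.exact_of_iso ?_ h
  refine ShortComplex.isoMk (ChainComplex.mk'XIso _ _ _ (fun g => ⟨_, Projective.d g,
      (Category.assoc _ _ _).trans ((congrArg _ (kernel.condition g)).trans comp_zero)⟩) n).symm
    (Iso.refl _) (Iso.refl _) ?_ ?_
  · dsimp [HomologicalComplex.sc', HomologicalComplex.shortComplexFunctor']
    rw [ChainComplex.mk'_d, Iso.inv_hom_id_assoc, Category.comp_id]
  · exact (Category.id_comp _).trans (Category.comp_id _).symm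

instance resCx_projective (n : ℕ) : Projective ((resCx A f).X n) := by
  obtain (_ | _ | _ | n) := n
  · exact projOfAA A
  · exact projOfAA A
  · apply (inferInstance : Projective (Projective.syzygies _))
  · apply (inferInstance : Projective (Projective.syzygies _))

end
noncomputable section
variable (A : Type) [CommRing A] (f : A)

def resPi0 : ModuleCat.of A A ⟶ ModuleCat.of A (A ⧸ Ideal.span {f}) :=
  ModuleCat.ofHom (Ideal.span {f}).mkQ

instance : Epi (resPi0 A f) := by
  rw [ModuleCat.epi_iff_surjective]
  exact Submodule.mkQ_surjective _

lemma resCx_comp : ModuleCat.ofHom (LinearMap.lsmul A A f) ≫ resPi0 A f = 0 := by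
  refine ModuleCat.hom_ext (LinearMap.ext fun a => ?_)
  show (Ideal.span {f}).mkQ (f • a) = 0
  rw [Submodule.mkQ_apply, Submodule.Quotient.mk_eq_zero]
  exact Ideal.mem_span_singleton'.mpr ⟨a, by rw [smul_eq_mul, mul_comm]⟩

lemma resSC_exact :
    (ShortComplex.mk (ModuleCat.ofHom (LinearMap.lsmul A A f)) (resPi0 A f)
      (resCx_comp A f)).Exact := by
  rw [ShortComplex.moduleCat_exact_iff]
  intro (x : A) (hx : (Ideal.span {f}).mkQ x = 0)
  have hm : x ∈ Ideal.span {f} := by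
    rwa [Submodule.mkQ_apply, Submodule.Quotient.mk_eq_zero] at hx
  obtain ⟨a, ha⟩ := Ideal.mem_span_singleton'.mp hm
  refine ⟨a, ?_⟩
  show f * a = x
  rw [mul_comm]; exact ha

def resolution : ProjectiveResolution (ModuleCat.of A (A ⧸ Ideal.span {f})) where
  complex := resCx A f
  π := (ChainComplex.toSingle₀Equiv _ _).symm ⟨resPi0 A f, by
          rw [resCx_d_1_0]; exact resCx_comp A f⟩
  quasiIso := ⟨fun n => by
    cases n
    · rw [ChainComplex.quasiIsoAt₀_iff, ShortComplex.quasiIso_iff_of_zeros']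
      · refine (ShortComplex.exact_and_epi_g_iff_of_iso ?_).2
          ⟨resSC_exact A f, inferInstance⟩
        exact ShortComplex.isoMk (Iso.refl _) (Iso.refl _) (Iso.refl _)
          (by simp [resCx]; rfl) (by simp; rfl)
      all_goals rfl
    · rw [quasiIsoAt_iff_exactAt']
      · apply resCx_exactAt_succ
      · apply ChainComplex.exactAt_succ_single_obj⟩
end
noncomputable section

/-- contraction `M ⊗[A] A →ₗ[A] M`, `m ⊗ a ↦ a • m` -/
def contr (A : Type) [CommRing A] (M : Type) [AddCommGroup M] [Module A M] :
    TensorProduct A M A →ₗ[A] M :=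
  TensorProduct.lift (LinearMap.lsmul A M).flip

@[simp] lemma contr_tmul (A : Type) [CommRing A] (M : Type) [AddCommGroup M] [Module A M]
    (m : M) (a : A) : contr A M (m ⊗ₜ a) = a • m := rfl

lemma mem_of_ftorsion {A : Type} [CommRing A] {f : A} {M : Type} [AddCommGroup M] [Module A M]
    (h : IsZero (((Tor (ModuleCat A) 1).obj (ModuleCat.of A M)).obj
        (ModuleCat.of A (A ⧸ Ideal.span {f}))))
    (x : M) (hx : f • x = 0) :
    x ∈ (LinearMap.ker (LinearMap.lsmul A A f)) • (⊤ : Submodule A M) := by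
  set F := (tensoringLeft (ModuleCat A)).obj (ModuleCat.of A M) with hF
  set P := resolution A f with hP
  have h1 : IsZero ((F.leftDerived 1).obj (ModuleCat.of A (A ⧸ Ideal.span {f}))) := h
  have h2 := h1.of_iso (P.isoLeftDerivedObj F 1).symm
  set K := (F.mapHomologicalComplex _).obj P.complex with hK
  have hex : K.ExactAt 1 := by
    rw [HomologicalComplex.exactAt_iff_isZero_homology]; exact h2
  rw [HomologicalComplex.exactAt_iff' K 2 1 0 (by simp) (by simp)] at hex
  rw [ShortComplex.moduleCat_exact_iff] at hex
  have hg : (K.sc' 2 1 0).g (show TensorProduct A M A from x ⊗ₜ (1:A)) = 0 := by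
    show (F.map ((resCx A f).d 1 0)) (x ⊗ₜ (1:A)) = 0
    rw [resCx_d_1_0]
    show (MonoidalCategory.whiskerLeft (ModuleCat.of A M)
      (ModuleCat.ofHom (LinearMap.lsmul A A f))) (x ⊗ₜ (1:A)) = 0
    rw [ModuleCat.MonoidalCategory.whiskerLeft_apply]
    show x ⊗ₜ[A] (f • (1:A)) = 0
    rw [← TensorProduct.smul_tmul, hx, TensorProduct.zero_tmul]
  obtain ⟨y, hy⟩ := hex _ hg
  have hd : ∀ z : ↑((resCx A f).X 2), f • (((resCx A f).d 2 1) z : A) = 0 := by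
    intro z
    have hdd := (resCx A f).d_comp_d 2 1 0
    rw [resCx_d_1_0] at hdd
    exact ConcreteCategory.congr_hom hdd z
  have key : ∀ w : TensorProduct A M ↑((resCx A f).X 2),
      contr A M ((F.map ((resCx A f).d 2 1)) w)
        ∈ (LinearMap.ker (LinearMap.lsmul A A f)) • (⊤ : Submodule A M) := by
    intro w
    induction w using TensorProduct.induction_on with
    | zero => erw [map_zero]; exact Submodule.zero_mem _
    | tmul m z =>
        have h3 : (F.map ((resCx A f).d 2 1)) (m ⊗ₜ z)
            = m ⊗ₜ (((resCx A f).d 2 1) z) :=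
          ModuleCat.MonoidalCategory.whiskerLeft_apply _ _ _ _
        erw [h3, contr_tmul]
        exact Submodule.smul_mem_smul (LinearMap.mem_ker.mpr (hd z)) trivial
    | add a b ha hb => erw [map_add, map_add]; exact Submodule.add_mem _ ha hb
  have hxc : x = contr A M ((K.sc' 2 1 0).f y) := by
    rw [hy]
    show x = contr A M (x ⊗ₜ (1:A))
    rw [contr_tmul, one_smul]
  rw [hxc]
  exact key y

end
section Main
variable {A : Type} [CommRing A] {f : A} {M : Type} [AddCommGroup M] [Module A M]

set_option maxHeartbeats 1000000 in
theorem stmt5' (N : ℕ)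
    (hA : ∀ a : A, (∃ n : ℕ, f ^ n * a = 0) → f ^ N * a = 0)
    (hflat : Module.Flat (A ⧸ Ideal.span {f}) ((A ⧸ Ideal.span {f}) ⊗[A] M))
    (htor : IsZero (((Tor (ModuleCat A) 1).obj (ModuleCat.of A M)).obj
        (ModuleCat.of A (A ⧸ Ideal.span {f})))) :
    ∀ x : M, (∃ n : ℕ, f ^ n • x = 0) → f ^ N • x = 0 := by
  classical
  set T : Ideal A := LinearMap.ker (LinearMap.lsmul A A (f ^ N)) with hT
  have hmemT : ∀ t : A, t ∈ T ↔ f ^ N * t = 0 := fun t => Iff.rfl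
  set Q := A ⧸ Ideal.span {f} with hQdef
  set mk : A →+* Q := Ideal.Quotient.mk (Ideal.span {f}) with hmk
  have hmkf : mk f = 0 := Ideal.Quotient.eq_zero_iff_mem.mpr
    (Ideal.mem_span_singleton_self f)
  -- `ψ : M → Q ⊗ M`
  set ψ : M →ₗ[A] Q ⊗[A] M := TensorProduct.mk A Q M 1 with hψ
  have halg : (algebraMap A Q) = (mk : A →+* Q) := Ideal.Quotient.algebraMap_eq _
  have hpsi_smul : ∀ (t : A) (w : Q ⊗[A] M), (mk t) • w = t • w := by
    intro t w
    rw [← halg]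
    exact algebraMap_smul Q t w
  -- elements of T • ⊤ are killed by f^N
  have hkill : ∀ y : M, y ∈ T • (⊤ : Submodule A M) → f ^ N • y = 0 := by
    intro y hy
    refine Submodule.smul_induction_on hy ?_ ?_
    · intro t ht m _
      rw [smul_smul, (hmemT t).mp ht, zero_smul]
    · intro a b ha hb; rw [smul_add, ha, hb, add_zero]
  -- ker(f) ⊆ T • ⊤ (from Tor vanishing)
  have hK1 : ∀ x : M, f • x = 0 → x ∈ T • (⊤ : Submodule A M) := by
    intro x hx
    refine Submodule.smul_mono_left ?_ (mem_of_ftorsion htor x hx)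
    intro a ha
    rw [LinearMap.mem_ker] at ha
    exact (hmemT a).mpr (hA a ⟨1, by simpa using ha⟩)
  -- representation of elements of T • ⊤
  have hrep : ∀ y ∈ T • (⊤ : Submodule A M), ∃ (ι : Type) (_ : Fintype ι)
      (t : ι → A) (m : ι → M), (∀ i, t i ∈ T) ∧ y = ∑ i, t i • m i := by
    intro y hy
    refine Submodule.smul_induction_on hy ?_ ?_
    · intro t ht m _
      exact ⟨PUnit, inferInstance, fun _ => t, fun _ => m, fun _ => ht, by simp⟩
    · rintro a b ⟨ι₁, _, t₁, m₁, ht₁, rfl⟩ ⟨ι₂, _, t₂, m₂, ht₂, rfl⟩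
      refine ⟨ι₁ ⊕ ι₂, inferInstance, Sum.elim t₁ t₂, Sum.elim m₁ m₂,
        ?_, by rw [Fintype.sum_sum_type]; simp⟩
      rintro (i | i) <;> simp [ht₁, ht₂]
  -- ψ is surjective
  have hsurj : ∀ w : Q ⊗[A] M, ∃ u : M, ψ u = w := by
    intro w
    induction w using TensorProduct.induction_on with
    | zero => exact ⟨0, map_zero ψ⟩
    | tmul q m =>
        obtain ⟨b, rfl⟩ := Ideal.Quotient.mk_surjective (I := Ideal.span {f}) q
        refine ⟨b • m, ?_⟩
        show (1 : Q) ⊗ₜ[A] (b • m) = _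
        rw [TensorProduct.tmul_smul, TensorProduct.smul_tmul',
          ← Algebra.algebraMap_eq_smul_one, halg]
    | add a b ha hb =>
        obtain ⟨u, hu⟩ := ha; obtain ⟨v, hv⟩ := hb
        exact ⟨u + v, by rw [map_add, hu, hv]⟩
  -- kernel of ψ : elements with ψ z = 0 are divisible by f
  have hker : ∀ z : M, ψ z = 0 → ∃ v : M, f • v = z := by
    intro z hz
    have h1 : TensorProduct.quotTensorEquivQuotSMul M (Ideal.span {f}) (ψ z) = 0 := by
      rw [hz, map_zero]
    have h2 : (Submodule.Quotient.mk z :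
        M ⧸ (Ideal.span {f} • (⊤ : Submodule A M))) = 0 := by
      rw [← h1]
      show _ = TensorProduct.quotTensorEquivQuotSMul M (Ideal.span {f}) ((1 : Q) ⊗ₜ z)
      have : ((1 : Q) : Q) = mk 1 := by simp
      rw [this]
      rw [TensorProduct.quotTensorEquivQuotSMul_mk_tmul, one_smul]
    rw [Submodule.Quotient.mk_eq_zero] at h2
    refine Submodule.smul_induction_on h2 ?_ ?_
    · intro t ht m _
      obtain ⟨a, ha⟩ := Ideal.mem_span_singleton'.mp ht
      exact ⟨a • m, by rw [smul_smul, mul_comm, ha]⟩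
    · rintro a b ⟨v₁, rfl⟩ ⟨v₂, rfl⟩
      exact ⟨v₁ + v₂, by rw [smul_add]⟩
  -- main step: f • x ∈ T • ⊤ → x ∈ T • ⊤
  have hstep : ∀ x : M, f • x ∈ T • (⊤ : Submodule A M) → x ∈ T • (⊤ : Submodule A M) := by
    intro x hx
    obtain ⟨ι, _, t, m, ht, hsum⟩ := hrep _ hx
    -- the relation in Q ⊗ M
    have hrel : ∑ i, (mk (t i)) • (ψ (m i)) = 0 := by
      have : ∑ i, (mk (t i)) • (ψ (m i)) = ψ (f • x) := by
        rw [hsum, map_sum]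
        exact Finset.sum_congr rfl fun i _ => by rw [hpsi_smul, map_smul]
      rw [this, map_smul, ← hpsi_smul, hmkf, zero_smul]
    obtain ⟨κ, a, y, hy1, hy2⟩ :=
      (haveI := hflat; Module.Flat.isTrivialRelation_of_sum_smul_eq_zero hrel)
    simp only [] at hy1 hy2
    -- lift the coefficients and the y's
    choose c hc using fun i j => Ideal.Quotient.mk_surjective (I := Ideal.span {f}) (a i j)
    choose u hu using fun j => hsurj (y j)
    -- m i = ∑ j c i j • u j + f • v i
    have hmi : ∀ i, ∃ v : M, m i = (∑ j, c i j • u j) + f • v := by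
      intro i
      have : ψ (m i - ∑ j, c i j • u j) = 0 := by
        rw [map_sub, map_sum, hy1 i]
        have : ∀ j, ψ (c i j • u j) = a i j • y j := by
          intro j
          rw [map_smul, ← hpsi_smul, hc, hu]
        rw [Finset.sum_congr rfl fun j _ => this j, sub_self]
      obtain ⟨v, hv⟩ := hker _ this
      exact ⟨v, by rw [hv]; abel⟩
    choose v hv using hmi
    -- ∑ i t i * c i j = b j * f with b j ∈ T
    have hbj : ∀ j, ∃ b : A, (∑ i, t i * c i j) = f * b ∧ b ∈ T := by
      intro j
      have h0 : mk (∑ i, t i * c i j) = 0 := by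
        rw [map_sum]
        rw [Finset.sum_congr rfl fun i _ => by rw [map_mul, hc]]
        exact hy2 j
      obtain ⟨b, hb⟩ := Ideal.mem_span_singleton'.mp (Ideal.Quotient.eq_zero_iff_mem.mp h0)
      refine ⟨b, by rw [← hb, mul_comm], ?_⟩
      rw [hmemT]
      refine hA b ⟨N + 2, ?_⟩
      have : f ^ (N + 1) * b = f ^ N * (∑ i, t i * c i j) := by
        rw [← hb]; ring
      have h2 : f ^ N * (∑ i, t i * c i j) = 0 := by
        rw [Finset.mul_sum]
        refine Finset.sum_eq_zero fun i _ => ?_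
        rw [← mul_assoc, (hmemT (t i)).mp (ht i), zero_mul]
      calc f ^ (N + 2) * b = f * (f ^ (N+1) * b) := by ring
        _ = f * 0 := by rw [this, h2]
        _ = 0 := mul_zero f
    choose b hb1 hb2 using hbj
    -- now compute f • (x - ∑ j b j • u j - ∑ i t i • v i) = 0
    have hcalc : f • x = f • ((∑ j, b j • u j) + ∑ i, t i • v i) := by
      rw [hsum]
      have : ∀ i, t i • m i = (∑ j, (t i * c i j) • u j) + f • (t i • v i) := by
        intro i
        rw [hv i, smul_add, Finset.smul_sum]
        congr 1
        · exact Finset.sum_congr rfl fun j _ => by rw [smul_smul]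
        · rw [smul_comm]
      rw [Finset.sum_congr rfl fun i _ => this i, Finset.sum_add_distrib]
      rw [smul_add, Finset.smul_sum]
      congr 1
      · rw [Finset.sum_comm]
        refine Finset.sum_congr rfl fun j _ => ?_
        rw [← Finset.sum_smul, hb1 j, mul_smul]
      · rw [Finset.smul_sum]
    have hz : f • (x - ((∑ j, b j • u j) + ∑ i, t i • v i)) = 0 := by
      rw [smul_sub, hcalc, sub_self]
    have hzmem := hK1 _ hz
    have hsums : ((∑ j, b j • u j) + ∑ i, t i • v i) ∈ T • (⊤ : Submodule A M) := by
      refine Submodule.add_mem _ ?_ ?_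
      · exact Submodule.sum_mem _ fun j _ => Submodule.smul_mem_smul (hb2 j) trivial
      · exact Submodule.sum_mem _ fun i _ => Submodule.smul_mem_smul (ht i) trivial
    have := Submodule.add_mem _ hzmem hsums
    simpa using this
  -- conclude by induction on n
  rintro x ⟨n, hn⟩
  refine hkill x ?_
  clear hflat htor
  induction n generalizing x with
  | zero =>
      have : x = 0 := by simpa using hn
      rw [this]; exact Submodule.zero_mem _
  | succ n ih =>
      refine hstep x (ih (f • x) ?_)
      rw [← hn, pow_succ, mul_smul]

end Main

/-- If `A` has `f^∞`-torsion bounded by `N` and `M` is completely flat for the `f`-adic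
topology (`M/fM` flat over `A/fA` and `Tor_k^A(M, A/fA) = 0` for `k ≥ 1`), then `M`
also has `f^∞`-torsion bounded by `N`. -/
theorem stmt5 (A : Type) [CommRing A] (f : A) (N : ℕ)
    (M : Type) [AddCommGroup M] [Module A M]
    (hA : ∀ a : A, (∃ n : ℕ, f ^ n * a = 0) → f ^ N * a = 0)
    (hflat : Module.Flat (A ⧸ Ideal.span {f}) ((A ⧸ Ideal.span {f}) ⊗[A] M))
    (htor : ∀ k : ℕ, 1 ≤ k →
      IsZero (((Tor (ModuleCat A) k).obj (ModuleCat.of A M)).obj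
        (ModuleCat.of A (A ⧸ Ideal.span {f})))) :
    ∀ x : M, (∃ n : ℕ, f ^ n • x = 0) → f ^ N • x = 0 :=
  stmt5' N hA hflat (htor 1 le_rfl)
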